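/- Let $w\in C^1(\mathbb R^n)$ satisfy $\sup_{\mathbb R^n}|Dw|\le c_w<\infty$, and suppose there exist constants $c'_w>0$ and $\delta>0$ such that $\frac{\big(w(x)-x\cdot Dw(x)\big)^2}{1+|Dw(x)|^2}\le c'_w\,\big(1+|x|^2+w(x)^2\big)^{1-\delta}$ for every $x\in\mathbb R^n$. Then: (i) for every $x\in\mathbb R^n$ the limit $V(x):=\lim_{t\to\infty}\frac{w(tx)}{t}$ exists; (ii) $V$ is positively 1-homogeneous and Lipschitz; and (iii) $\lim_{|x|\to\infty}\frac{|w(x)-V(x)|}{|x|}=0$. -/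

import Mathlib

open Filter

set_option maxHeartbeats 1000000

/-- If `w ∈ C¹(ℝⁿ)` has bounded gradient and satisfies the pointwise bound
`⟨X,ν⟩² ≤ c'_w (1+|X|²)^{1-δ}` on its graph, then the blow-down limit
`V(x) = lim_{t→∞} w(tx)/t` exists, `V` is positively 1-homogeneous and Lipschitz, and
`|w(x)-V(x)|/|x| → 0` as `|x| → ∞`. -/
theorem stmt9 (n : ℕ) (w : EuclideanSpace ℝ (Fin n) → ℝ) (cw cw' δ : ℝ) (hδ : 0 < δ)
    (hw : ContDiff ℝ 1 w)
    (hgrad : ∀ x, ‖fderiv ℝ w x‖ ≤ cw)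
    (hcw' : 0 < cw')
    (hbound : ∀ x, (w x - fderiv ℝ w x x) ^ 2 / (1 + ‖fderiv ℝ w x‖ ^ 2)
      ≤ cw' * (1 + ‖x‖ ^ 2 + (w x) ^ 2) ^ (1 - δ)) :
    ∃ V : EuclideanSpace ℝ (Fin n) → ℝ,
      (∀ x, Tendsto (fun t : ℝ => w (t • x) / t) atTop (nhds (V x))) ∧
      (∀ r : ℝ, 0 < r → ∀ x, V (r • x) = r * V x) ∧
      (∃ L : NNReal, LipschitzWith L V) ∧
      Tendsto (fun x => |w x - V x| / ‖x‖)
        (Filter.cocompact (EuclideanSpace ℝ (Fin n))) (nhds 0) := by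
  classical
  have hwdiff : Differentiable ℝ w := hw.differentiable one_ne_zero
  have hDcont : Continuous (fderiv ℝ w) := hw.continuous_fderiv one_ne_zero
  have hcw0 : (0:ℝ) ≤ cw := (norm_nonneg _).trans (hgrad 0)
  set M : ℝ := |w 0| with hM
  have hM0 : 0 ≤ M := abs_nonneg _
  have hwlip : ∀ y z : EuclideanSpace ℝ (Fin n), |w y - w z| ≤ cw * ‖y - z‖ := by
    intro y z
    have := Convex.norm_image_sub_le_of_norm_fderiv_le
      (fun u _ => hwdiff u) (fun u _ => hgrad u) convex_univ (Set.mem_univ z) (Set.mem_univ y)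
    simpa [Real.norm_eq_abs] using this
  have hwle : ∀ y : EuclideanSpace ℝ (Fin n), |w y| ≤ M + cw * ‖y‖ := by
    intro y
    have h1 : |w y - w 0| ≤ cw * ‖y‖ := by simpa using hwlip y 0
    calc |w y| = |(w y - w 0) + w 0| := by ring_nf
      _ ≤ |w y - w 0| + |w 0| := abs_add_le _ _
      _ ≤ cw * ‖y‖ + M := add_le_add h1 le_rfl
      _ = M + cw * ‖y‖ := by ring
  set δ' : ℝ := min δ 1 with hδ'
  have hδ'0 : 0 < δ' := lt_min hδ one_pos
  have hδ'le1 : δ' ≤ 1 := min_le_right _ _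
  have hδ'leδ : δ' ≤ δ := min_le_left _ _
  set B : ℝ := 2 + (M + cw) ^ 2 with hB
  have hB1 : (1:ℝ) ≤ B := by nlinarith [sq_nonneg (M + cw)]
  have hB0 : (0:ℝ) ≤ B := by linarith
  set K : ℝ := Real.sqrt (cw' * (1 + cw ^ 2) * B) with hK
  have hK0 : 0 ≤ K := Real.sqrt_nonneg _
  have hKsq : K ^ 2 = cw' * (1 + cw ^ 2) * B := Real.sq_sqrt (by positivity)
  -- pointwise bound on `|w y - Dw(y) y|`
  have hE : ∀ (y : EuclideanSpace ℝ (Fin n)) (τ : ℝ), 1 ≤ τ → ‖y‖ ≤ τ →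
      |w y - fderiv ℝ w y y| ≤ K * τ ^ (1 - δ') := by
    intro y τ hτ hyτ
    have hτ0 : (0:ℝ) < τ := lt_of_lt_of_le one_pos hτ
    set A : ℝ := 1 + ‖y‖ ^ 2 + (w y) ^ 2 with hA
    have hA1 : (1:ℝ) ≤ A := by nlinarith [sq_nonneg ‖y‖, sq_nonneg (w y)]
    have hA0 : (0:ℝ) ≤ A := by linarith
    have hAB : A ≤ B * τ ^ 2 := by
      have h1 : |w y| ≤ (M + cw) * τ := by
        have h2 := hwle y
        nlinarith [norm_nonneg y]
      have h2 : (w y) ^ 2 ≤ (M + cw) ^ 2 * τ ^ 2 := by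
        nlinarith [abs_nonneg (w y), sq_abs (w y)]
      nlinarith [norm_nonneg y, sq_nonneg τ]
    have hrpow1 : A ^ (1 - δ) ≤ A ^ (1 - δ') :=
      Real.rpow_le_rpow_of_exponent_le hA1 (by linarith)
    have hrpow2 : A ^ (1 - δ') ≤ (B * τ ^ 2) ^ (1 - δ') :=
      Real.rpow_le_rpow hA0 hAB (by linarith)
    have hrpow3 : (B * τ ^ 2) ^ (1 - δ') = B ^ (1 - δ') * (τ ^ 2) ^ (1 - δ') :=
      Real.mul_rpow hB0 (sq_nonneg τ)
    have hrpow4 : B ^ (1 - δ') ≤ B := by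
      calc B ^ (1 - δ') ≤ B ^ (1:ℝ) := Real.rpow_le_rpow_of_exponent_le hB1 (by linarith)
        _ = B := Real.rpow_one B
    have hrpow5 : (τ ^ 2) ^ (1 - δ') = (τ ^ (1 - δ')) ^ 2 := by
      rw [← Real.rpow_natCast τ 2, ← Real.rpow_natCast (τ ^ (1 - δ')) 2,
        ← Real.rpow_mul hτ0.le, ← Real.rpow_mul hτ0.le]
      ring_nf
    have hτδ : (0:ℝ) ≤ τ ^ (1 - δ') := Real.rpow_nonneg hτ0.le _
    have hden : (0:ℝ) < 1 + ‖fderiv ℝ w y‖ ^ 2 := by positivity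
    have h0 := (div_le_iff₀ hden).mp (hbound y)
    have hDle : ‖fderiv ℝ w y‖ ^ 2 ≤ cw ^ 2 :=
      pow_le_pow_left₀ (norm_nonneg _) (hgrad y) 2
    have hApos : (0:ℝ) ≤ A ^ (1 - δ) := Real.rpow_nonneg hA0 _
    have hsq : (w y - fderiv ℝ w y y) ^ 2 ≤ (K * τ ^ (1 - δ')) ^ 2 := by
      have hstep : cw' * A ^ (1 - δ) * (1 + ‖fderiv ℝ w y‖ ^ 2)
          ≤ cw' * (1 + cw ^ 2) * A ^ (1 - δ) := by
        nlinarith [hcw'.le, hApos]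
      have hstep2 : cw' * (1 + cw ^ 2) * A ^ (1 - δ)
          ≤ cw' * (1 + cw ^ 2) * (B * (τ ^ (1 - δ')) ^ 2) := by
        have hcc : (0:ℝ) ≤ cw' * (1 + cw ^ 2) := by positivity
        have : A ^ (1 - δ) ≤ B * (τ ^ (1 - δ')) ^ 2 := by
          calc A ^ (1 - δ) ≤ A ^ (1 - δ') := hrpow1
            _ ≤ (B * τ ^ 2) ^ (1 - δ') := hrpow2
            _ = B ^ (1 - δ') * (τ ^ (1 - δ')) ^ 2 := by rw [hrpow3, hrpow5]
            _ ≤ B * (τ ^ (1 - δ')) ^ 2 := by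
                nlinarith [sq_nonneg (τ ^ (1 - δ')), hrpow4, Real.rpow_nonneg hB0 (1 - δ')]
        nlinarith [sq_nonneg (τ ^ (1 - δ'))]
      calc (w y - fderiv ℝ w y y) ^ 2 ≤ cw' * A ^ (1 - δ) * (1 + ‖fderiv ℝ w y‖ ^ 2) := h0
        _ ≤ cw' * (1 + cw ^ 2) * (B * (τ ^ (1 - δ')) ^ 2) := le_trans hstep hstep2
        _ = (K * τ ^ (1 - δ')) ^ 2 := by rw [mul_pow, hKsq]; ring
    have hrn : (0:ℝ) ≤ K * τ ^ (1 - δ') := mul_nonneg hK0 hτδ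
    calc |w y - fderiv ℝ w y y| = Real.sqrt ((w y - fderiv ℝ w y y) ^ 2) :=
          (Real.sqrt_sq_eq_abs _).symm
      _ ≤ Real.sqrt ((K * τ ^ (1 - δ')) ^ 2) := Real.sqrt_le_sqrt hsq
      _ = K * τ ^ (1 - δ') := Real.sqrt_sq hrn
  -- derivative of `t ↦ w (t • x) / t`
  have hderiv : ∀ (x : EuclideanSpace ℝ (Fin n)) (τ : ℝ), τ ≠ 0 →
      HasDerivAt (fun t : ℝ => w (t • x) / t)
        ((fderiv ℝ w (τ • x) x * τ - w (τ • x)) / τ ^ 2) τ := by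
    intro x τ hτ
    have h1 : HasDerivAt (fun t : ℝ => t • x) x τ := by
      simpa using (hasDerivAt_id τ).smul_const x
    have h2 : HasDerivAt (fun t : ℝ => w (t • x)) (fderiv ℝ w (τ • x) x) τ :=
      (hwdiff (τ • x)).hasFDerivAt.comp_hasDerivAt τ h1
    have h3 := h2.div (hasDerivAt_id' (x := τ)) hτ
    simp only [mul_one] at h3
    exact h3
  -- bound on the derivative
  have hgb : ∀ (x : EuclideanSpace ℝ (Fin n)), ‖x‖ ≤ 1 → ∀ τ : ℝ, 1 ≤ τ →
      |(fderiv ℝ w (τ • x) x * τ - w (τ • x)) / τ ^ 2| ≤ K * τ ^ (-1 - δ') := by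
    intro x hx τ hτ
    have hτ0 : (0:ℝ) < τ := lt_of_lt_of_le one_pos hτ
    have hnorm : ‖τ • x‖ ≤ τ := by
      rw [norm_smul, Real.norm_eq_abs, abs_of_pos hτ0]
      nlinarith [norm_nonneg x]
    have h1 : fderiv ℝ w (τ • x) x * τ - w (τ • x)
        = -(w (τ • x) - fderiv ℝ w (τ • x) (τ • x)) := by
      rw [map_smul]
      simp [smul_eq_mul]
      ring
    have h2 : |fderiv ℝ w (τ • x) x * τ - w (τ • x)| ≤ K * τ ^ (1 - δ') := by
      rw [h1, abs_neg]
      exact hE _ τ hτ hnorm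
    rw [abs_div, abs_of_pos (pow_pos hτ0 2), div_le_iff₀ (pow_pos hτ0 2)]
    have h3 : K * τ ^ (-1 - δ') * τ ^ 2 = K * τ ^ (1 - δ') := by
      rw [mul_assoc, ← Real.rpow_natCast τ 2, ← Real.rpow_add hτ0]
      congr 1
      congr 1
      push_cast
      ring
    rw [h3]
    exact h2
  -- key quantitative Cauchy estimate
  set C : ℝ := K / δ' with hC
  have hC0 : 0 ≤ C := div_nonneg hK0 hδ'0.le
  have hkey : ∀ (x : EuclideanSpace ℝ (Fin n)), ‖x‖ ≤ 1 → ∀ s t : ℝ, 1 ≤ s → s ≤ t →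
      |w (t • x) / t - w (s • x) / s| ≤ C * s ^ (-δ') := by
    intro x hx s t hs hst
    have hs0 : (0:ℝ) < s := lt_of_lt_of_le one_pos hs
    have huIcc : Set.uIcc s t = Set.Icc s t := Set.uIcc_of_le hst
    set g' : ℝ → ℝ := fun τ => (fderiv ℝ w (τ • x) x * τ - w (τ • x)) / τ ^ 2 with hg'
    have hcont : ContinuousOn g' (Set.uIcc s t) := by
      rw [huIcc]
      apply ContinuousOn.div
      · apply Continuous.continuousOn
        exact (((hDcont.comp (continuous_id.smul continuous_const)).clm_apply
          continuous_const).mul continuous_id).sub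
          (hw.continuous.comp (continuous_id.smul continuous_const))
      · exact (continuous_pow 2).continuousOn
      · intro τ hτ
        exact pow_ne_zero 2 (ne_of_gt (lt_of_lt_of_le hs0 hτ.1))
    have hint : IntervalIntegrable g' MeasureTheory.volume s t :=
      hcont.intervalIntegrable
    have hftc : ∫ τ in s..t, g' τ = w (t • x) / t - w (s • x) / s := by
      apply intervalIntegral.integral_eq_sub_of_hasDerivAt _ hint
      intro τ hτ
      rw [huIcc] at hτ
      exact hderiv x τ (ne_of_gt (lt_of_lt_of_le hs0 hτ.1))
    have hφi : IntervalIntegrable (fun τ : ℝ => K * τ ^ (-1 - δ')) MeasureTheory.volume s t := by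
      apply ContinuousOn.intervalIntegrable
      apply ContinuousOn.mul continuousOn_const
      intro τ hτ
      rw [huIcc] at hτ
      exact (Real.continuousAt_rpow_const τ _
        (Or.inl (ne_of_gt (lt_of_lt_of_le hs0 hτ.1)))).continuousWithinAt
    have hbnd : ‖∫ τ in s..t, g' τ‖ ≤ |∫ τ in s..t, K * τ ^ (-1 - δ')| := by
      apply intervalIntegral.norm_integral_le_abs_of_norm_le _ hφi
      rw [MeasureTheory.ae_restrict_iff' measurableSet_uIoc]
      apply MeasureTheory.ae_of_all
      intro τ hτ
      rw [Set.uIoc_of_le hst] at hτ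
      simpa [Real.norm_eq_abs] using hgb x hx τ (le_trans hs hτ.1.le)
    have hts : t ^ (-δ') ≤ s ^ (-δ') :=
      Real.rpow_le_rpow_of_nonpos hs0 hst (by linarith)
    have ht0 : (0:ℝ) ≤ t ^ (-δ') := Real.rpow_nonneg (by linarith) _
    have hval : ∫ τ in s..t, K * τ ^ (-1 - δ') = K * ((s ^ (-δ') - t ^ (-δ')) / δ') := by
      rw [intervalIntegral.integral_const_mul]
      rw [integral_rpow (Or.inr ⟨by intro h; nlinarith, by
        rw [huIcc]; rintro ⟨h1, -⟩; linarith⟩)]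
      rw [show (-1 - δ') + 1 = -δ' by ring, div_neg, ← neg_div, neg_sub]
    calc |w (t • x) / t - w (s • x) / s| = |∫ τ in s..t, g' τ| := by rw [hftc]
      _ ≤ |∫ τ in s..t, K * τ ^ (-1 - δ')| := by
          rw [← Real.norm_eq_abs]; exact hbnd
      _ = K * ((s ^ (-δ') - t ^ (-δ')) / δ') := by
          rw [hval, abs_of_nonneg]
          exact mul_nonneg hK0 (div_nonneg (by linarith) hδ'0.le)
      _ ≤ C * s ^ (-δ') := by
          have h4 : s ^ (-δ') - t ^ (-δ') ≤ s ^ (-δ') := by linarith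
          calc K * ((s ^ (-δ') - t ^ (-δ')) / δ') = C * (s ^ (-δ') - t ^ (-δ')) := by
                rw [hC]; ring
            _ ≤ C * s ^ (-δ') := mul_le_mul_of_nonneg_left h4 hC0
  -- existence of the limit together with a uniform rate, for `‖x‖ ≤ 1`
  have hex1 : ∀ x : EuclideanSpace ℝ (Fin n), ‖x‖ ≤ 1 →
      ∃ v : ℝ, Tendsto (fun t : ℝ => w (t • x) / t) atTop (nhds v) ∧
        ∀ s : ℝ, 1 ≤ s → |w (s • x) / s - v| ≤ C * s ^ (-δ') := by
    intro x hx
    set a : ℕ → ℝ := fun k => w (((k : ℝ) + 1) • x) / ((k : ℝ) + 1) with ha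
    have hca : CauchySeq a := by
      apply cauchySeq_of_le_tendsto_0 (fun N : ℕ => C * ((N : ℝ) + 1) ^ (-δ'))
      · intro p q N hp hq
        have hmain : ∀ p q : ℕ, N ≤ p → N ≤ q → p ≤ q → dist (a p) (a q) ≤ C * ((N : ℝ) + 1) ^ (-δ') := by
          intro p q hp hq hpq
          have h1 : (1:ℝ) ≤ (p : ℝ) + 1 := by
            have h0 : (0:ℝ) ≤ (p : ℝ) := Nat.cast_nonneg p
            linarith
          have h2 : ((p : ℝ) + 1) ≤ (q : ℝ) + 1 := by
            have : (p : ℝ) ≤ q := Nat.cast_le.mpr hpq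
            linarith
          have h3 := hkey x hx ((p : ℝ) + 1) ((q : ℝ) + 1) h1 h2
          have h4 : ((p : ℝ) + 1) ^ (-δ') ≤ ((N : ℝ) + 1) ^ (-δ') := by
            apply Real.rpow_le_rpow_of_nonpos (by positivity) _ (by linarith)
            have : (N : ℝ) ≤ p := Nat.cast_le.mpr hp
            linarith
          rw [Real.dist_eq, abs_sub_comm]
          calc |a q - a p| ≤ C * ((p : ℝ) + 1) ^ (-δ') := h3
            _ ≤ C * ((N : ℝ) + 1) ^ (-δ') := mul_le_mul_of_nonneg_left h4 hC0
        rcases le_total p q with h | h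
        · exact hmain p q hp hq h
        · rw [dist_comm]; exact hmain q p hq hp h
      · have h1 : Tendsto (fun N : ℕ => ((N : ℝ) + 1)) atTop atTop :=
          tendsto_atTop_add_const_right atTop 1 tendsto_natCast_atTop_atTop
        have h2 : Tendsto (fun N : ℕ => ((N : ℝ) + 1) ^ (-δ')) atTop (nhds 0) :=
          (tendsto_rpow_neg_atTop hδ'0).comp h1
        simpa using h2.const_mul C
    obtain ⟨v, hv⟩ := cauchySeq_tendsto_of_complete hca
    have hvb : ∀ s : ℝ, 1 ≤ s → |w (s • x) / s - v| ≤ C * s ^ (-δ') := by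
      intro s hs1
      have hlim : Tendsto (fun k : ℕ => |w (s • x) / s - a k|) atTop
          (nhds |w (s • x) / s - v|) := (tendsto_const_nhds.sub hv).abs
      apply le_of_tendsto hlim
      filter_upwards [eventually_ge_atTop (Nat.ceil s)] with k hk
      have hsk : s ≤ (k : ℝ) + 1 := by
        have h1 : s ≤ (Nat.ceil s : ℝ) := Nat.le_ceil s
        have h2 : ((Nat.ceil s : ℕ) : ℝ) ≤ (k : ℝ) := Nat.cast_le.mpr hk
        linarith
      have := hkey x hx s ((k : ℝ) + 1) hs1 hsk
      calc |w (s • x) / s - a k| = |w (((k : ℝ) + 1) • x) / ((k : ℝ) + 1) - w (s • x) / s| := by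
            rw [abs_sub_comm]
        _ ≤ C * s ^ (-δ') := this
    refine ⟨v, ?_, hvb⟩
    rw [tendsto_iff_dist_tendsto_zero]
    have hb : ∀ᶠ t : ℝ in atTop, dist (w (t • x) / t) v ≤ C * t ^ (-δ') := by
      filter_upwards [eventually_ge_atTop (1 : ℝ)] with t ht
      rw [Real.dist_eq]
      exact hvb t ht
    have hg : Tendsto (fun t : ℝ => C * t ^ (-δ')) atTop (nhds 0) := by
      simpa using ((tendsto_rpow_neg_atTop hδ'0).const_mul C)
    exact squeeze_zero' (Eventually.of_forall fun t => dist_nonneg) hb hg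
  -- existence of the limit for all `x`
  have hex : ∀ x : EuclideanSpace ℝ (Fin n),
      ∃ v : ℝ, Tendsto (fun t : ℝ => w (t • x) / t) atTop (nhds v) := by
    intro x
    rcases le_or_gt ‖x‖ 1 with hx | hx
    · obtain ⟨v, hv, -⟩ := hex1 x hx
      exact ⟨v, hv⟩
    · have hx0 : x ≠ 0 := by
        intro h
        rw [h, norm_zero] at hx
        linarith
      have hxpos : (0:ℝ) < ‖x‖ := norm_pos_iff.mpr hx0
      set u : EuclideanSpace ℝ (Fin n) := ‖x‖⁻¹ • x with hu
      have hu1 : ‖u‖ ≤ 1 := by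
        rw [hu, norm_smul, Real.norm_eq_abs, abs_of_pos (inv_pos.mpr hxpos),
          inv_mul_cancel₀ (ne_of_gt hxpos)]
      obtain ⟨v, hv, -⟩ := hex1 u hu1
      refine ⟨‖x‖ * v, ?_⟩
      have h1 : Tendsto (fun t : ℝ => t * ‖x‖) atTop atTop :=
        Tendsto.atTop_mul_const hxpos tendsto_id
      have h2 : Tendsto (fun t : ℝ => ‖x‖ * (w ((t * ‖x‖) • u) / (t * ‖x‖))) atTop
          (nhds (‖x‖ * v)) := (hv.comp h1).const_mul ‖x‖
      apply Filter.Tendsto.congr' _ h2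
      filter_upwards [eventually_gt_atTop (0 : ℝ)] with t ht
      have hs : (t * ‖x‖) • u = t • x := by
        rw [hu, smul_smul, mul_assoc, mul_inv_cancel₀ (ne_of_gt hxpos), mul_one]
      rw [hs]
      field_simp
  choose V hV using hex
  -- homogeneity
  have hhom : ∀ r : ℝ, 0 < r → ∀ x, V (r • x) = r * V x := by
    intro r hr x
    have h1 : Tendsto (fun t : ℝ => r * (w ((t * r) • x) / (t * r))) atTop
        (nhds (r * V x)) := ((hV x).comp (Tendsto.atTop_mul_const hr tendsto_id)).const_mul r
    have h2 : Tendsto (fun t : ℝ => w (t • r • x) / t) atTop (nhds (r * V x)) := by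
      apply Filter.Tendsto.congr' _ h1
      filter_upwards [eventually_gt_atTop (0 : ℝ)] with t ht
      rw [smul_smul]
      field_simp
    exact tendsto_nhds_unique (hV (r • x)) h2
  refine ⟨V, hV, hhom, ?_, ?_⟩
  · -- Lipschitz
    refine ⟨⟨cw, hcw0⟩, LipschitzWith.of_dist_le_mul fun x y => ?_⟩
    show dist (V x) (V y) ≤ cw * dist x y
    have hlim : Tendsto (fun t : ℝ => dist (w (t • x) / t) (w (t • y) / t)) atTop
        (nhds (dist (V x) (V y))) := (hV x).dist (hV y)
    apply le_of_tendsto hlim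
    filter_upwards [eventually_gt_atTop (0 : ℝ)] with t ht
    rw [Real.dist_eq, div_sub_div_same, abs_div, abs_of_pos ht, div_le_iff₀ ht]
    calc |w (t • x) - w (t • y)| ≤ cw * ‖t • x - t • y‖ := hwlip _ _
      _ = cw * dist x y * t := by
          rw [← smul_sub, norm_smul, Real.norm_eq_abs, abs_of_pos ht, dist_eq_norm]
          ring
  · -- decay at infinity
    have hfar : ∀ y : EuclideanSpace ℝ (Fin n), 1 ≤ ‖y‖ →
        |w y - V y| / ‖y‖ ≤ C * ‖y‖ ^ (-δ') := by
      intro y hy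
      have hpos : (0:ℝ) < ‖y‖ := lt_of_lt_of_le one_pos hy
      have hy0 : y ≠ 0 := norm_pos_iff.mp hpos
      set u : EuclideanSpace ℝ (Fin n) := ‖y‖⁻¹ • y with hu
      have hu1 : ‖u‖ ≤ 1 := by
        rw [hu, norm_smul, Real.norm_eq_abs, abs_of_pos (inv_pos.mpr hpos),
          inv_mul_cancel₀ (ne_of_gt hpos)]
      obtain ⟨v, hv, hvb⟩ := hex1 u hu1
      have hvV : v = V u := tendsto_nhds_unique hv (hV u)
      have hyu : ‖y‖ • u = y := by
        rw [hu, smul_smul, mul_inv_cancel₀ (ne_of_gt hpos), one_smul]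
      have hVy : V y = ‖y‖ * V u := by
        have h0 := hhom ‖y‖ hpos u
        rwa [hyu] at h0
      have hb := hvb ‖y‖ hy
      rw [hyu, hvV] at hb
      have heq : |w y - V y| / ‖y‖ = |w y / ‖y‖ - V u| := by
        rw [hVy, ← abs_of_pos hpos, ← abs_div]
        congr 1
        field_simp
        rw [abs_of_pos hpos]
        ring
      rw [heq]
      exact hb
    have h1 : Tendsto (fun y : EuclideanSpace ℝ (Fin n) => C * ‖y‖ ^ (-δ'))
        (Filter.cocompact (EuclideanSpace ℝ (Fin n))) (nhds 0) := by
      have h2 : Tendsto (fun s : ℝ => C * s ^ (-δ')) atTop (nhds 0) := by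
        simpa using (tendsto_rpow_neg_atTop hδ'0).const_mul C
      exact h2.comp tendsto_norm_cocompact_atTop
    apply squeeze_zero' (Eventually.of_forall fun y => div_nonneg (abs_nonneg _) (norm_nonneg _))
      _ h1
    filter_upwards [tendsto_norm_cocompact_atTop.eventually_ge_atTop 1] with y hy
    exact hfar y hy
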